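/- Existence of Nash equilibrium in ACCES games: let X be a nonempty finite set, Y a nonempty compact metric space, and u : X × Y → ℝ continuous in y for each fixed x. Then there exist p* ∈ Δ_X and a Borel probability measure q* on Y such that U(p, q*) ≤ U(p*, q*) ≤ U(p*, q) for all p ∈ Δ_X and all Borel probability measures q on Y, where U(p,q) = ∑_x p(x) ∫_Y u(x,y) dq. -/

import Mathlib

open MeasureTheory BigOperators

section Aux

variable {Y : Type*} [MetricSpace Y] [MeasurableSpace Y] [BorelSpace Y] [CompactSpace Y]

lemma acces_integrable (f : Y → ℝ) (hf : Continuous f) (μ : Measure Y)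
    [IsFiniteMeasureOnCompacts μ] : Integrable f μ :=
  hf.integrable_of_hasCompactSupport (HasCompactSupport.of_compactSpace f)

lemma acces_integral_comb {N : ℕ} (w : Fin N → ℝ) (hw : ∀ i, 0 ≤ w i) (ys : Fin N → Y)
    (f : Y → ℝ) (hf : Continuous f) :
    ∫ y, f y ∂(∑ i, ENNReal.ofReal (w i) • Measure.dirac (ys i)) = ∑ i, w i * f (ys i) := by
  rw [integral_finset_sum_measure (fun i _ => (acces_integrable f hf _).smul_measure
    ENNReal.ofReal_ne_top)]
  simp [integral_smul_measure, integral_dirac, ENNReal.toReal_ofReal (hw _), smul_eq_mul]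

lemma acces_isProbability {N : ℕ} (w : Fin N → ℝ) (hw : ∀ i, 0 ≤ w i)
    (hw1 : ∑ i, w i = 1) (ys : Fin N → Y) :
    IsProbabilityMeasure (∑ i, ENNReal.ofReal (w i) • Measure.dirac (ys i)) := by
  constructor
  have : (∑ i, ENNReal.ofReal (w i) • Measure.dirac (ys i)) Set.univ
      = ∑ i, ENNReal.ofReal (w i) := by
    simp [Measure.finset_sum_apply, Measure.smul_apply, smul_eq_mul]
  rw [this, ← ENNReal.ofReal_sum_of_nonneg (fun i _ => hw i), hw1, ENNReal.ofReal_one]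

end Aux

theorem acces_nash_equilibrium_exists
    {X Y : Type*} [Fintype X] [Nonempty X]
    [MetricSpace Y] [CompactSpace Y] [Nonempty Y]
    [MeasurableSpace Y] [BorelSpace Y]
    (u : X → Y → ℝ) (hc : ∀ x : X, Continuous (u x)) :
    ∃ (pstar : X → ℝ) (qstar : ProbabilityMeasure Y),
      ((∀ x, 0 ≤ pstar x) ∧ ∑ x, pstar x = 1) ∧
      ∀ (p : X → ℝ), ((∀ x, 0 ≤ p x) ∧ ∑ x, p x = 1) →
        ∀ q : ProbabilityMeasure Y,
          (∑ x, p x * ∫ y, u x y ∂(qstar : Measure Y)) ≤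
              (∑ x, pstar x * ∫ y, u x y ∂(qstar : Measure Y)) ∧
            (∑ x, pstar x * ∫ y, u x y ∂(qstar : Measure Y)) ≤
              ∑ x, pstar x * ∫ y, u x y ∂(q : Measure Y) := by
  classical
  set C : Set (X → ℝ) := Set.range (fun y x => u x y) with hC
  set N : ℕ := Fintype.card X + 1 with hN
  set Φ : (Fin N → ℝ) × (Fin N → Y) → (X → ℝ) :=
    fun wz => ∑ i, wz.1 i • (fun x => u x (wz.2 i)) with hΦ
  have hΦcont : Continuous Φ := by
    apply continuous_finset_sum
    intro i _
    exact (((continuous_apply i).comp continuous_fst).smul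
      (continuous_pi fun x => (hc x).comp ((continuous_apply i).comp continuous_snd)))
  set K : Set (X → ℝ) := convexHull ℝ C with hK
  -- Carathéodory: K is the image of a compact set
  have hKeq : K = Φ '' ((stdSimplex ℝ (Fin N)) ×ˢ (Set.univ : Set (Fin N → Y))) := by
    apply Set.Subset.antisymm
    · intro c hcK
      obtain ⟨ι, hι, z, w, hzC, hindep, hwpos, hw1, hsum⟩ :=
        eq_pos_convex_span_of_mem_convexHull hcK
      letI := hι
      have hcard : Fintype.card ι ≤ N := by
        have h1 := hindep.card_le_finrank_succ
        have h2 := Submodule.finrank_le (vectorSpan ℝ (Set.range z))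
        rw [hN, Module.finrank_pi] at *
        omega
      obtain ⟨e⟩ : Nonempty (ι ↪ Fin N) :=
        Function.Embedding.nonempty_of_card_le (by simpa using hcard)
      have hzsel : ∀ i : ι, ∃ y : Y, (fun x => u x y) = z i := fun i => hzC ⟨i, rfl⟩
      choose ysel hysel using hzsel
      set w' : Fin N → ℝ := fun j => if h : ∃ i, e i = j then w h.choose else 0 with hw'
      set ys' : Fin N → Y := fun j => if h : ∃ i, e i = j then ysel h.choose
        else Classical.arbitrary Y with hys'
      have hw'e : ∀ i : ι, w' (e i) = w i := by
        intro i
        have h : ∃ i', e i' = e i := ⟨i, rfl⟩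
        simp only [hw', dif_pos h]
        have := h.choose_spec
        rw [e.injective this]
      have hys'e : ∀ i : ι, ys' (e i) = ysel i := by
        intro i
        have h : ∃ i', e i' = e i := ⟨i, rfl⟩
        simp only [hys', dif_pos h]
        have := h.choose_spec
        rw [e.injective this]
      have hw'0 : ∀ j, j ∉ Finset.univ.map e → w' j = 0 := by
        intro j hj
        have : ¬ ∃ i, e i = j := by
          intro ⟨i, hi⟩; exact hj (Finset.mem_map.mpr ⟨i, Finset.mem_univ _, hi⟩)
        simp only [hw', dif_neg this]
      refine ⟨(w', ys'), ⟨⟨?_, ?_⟩, Set.mem_univ _⟩, ?_⟩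
      · intro j
        by_cases h : ∃ i, e i = j
        · simp only [hw', dif_pos h]; exact (hwpos _).le
        · simp only [hw', dif_neg h]; exact le_rfl
      · rw [← Finset.sum_subset (Finset.subset_univ (Finset.univ.map e))
          (fun j _ hj => hw'0 j hj), Finset.sum_map]
        simpa only [hw'e] using hw1
      · rw [hΦ]
        simp only
        rw [← Finset.sum_subset (Finset.subset_univ (Finset.univ.map e))
          (fun j _ hj => by rw [hw'0 j hj, zero_smul]), Finset.sum_map]
        simp only [Function.Embedding.coeFn_mk, hw'e, hys'e, hysel]
        exact hsum
    · rintro c ⟨⟨w, ys⟩, ⟨⟨hw0, hw1⟩, -⟩, rfl⟩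
      exact (convex_convexHull ℝ C).sum_mem (fun i _ => hw0 i) hw1
        (fun i _ => subset_convexHull ℝ C ⟨ys i, rfl⟩)
  have hKcomp : IsCompact K := by
    rw [hKeq]
    exact ((isCompact_stdSimplex (𝕜 := ℝ) (ι := Fin N)).prod isCompact_univ).image hΦcont
  have hKconv : Convex ℝ K := convex_convexHull ℝ C
  have hKne : K.Nonempty := by
    refine ⟨fun x => u x (Classical.arbitrary Y), subset_convexHull ℝ C ⟨_, rfl⟩⟩
  -- the max-coordinate function
  set g : (X → ℝ) → ℝ := fun c => Finset.univ.sup' Finset.univ_nonempty c with hg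
  have hgcont : Continuous g := by
    rw [continuous_iff_continuousAt]
    intro c
    exact ContinuousAt.finset_sup'_apply Finset.univ_nonempty
      (fun x _ => (continuous_apply x).continuousAt)
  obtain ⟨cstar, hcstarK, hmin⟩ := hKcomp.exists_isMinOn hKne hgcont.continuousOn
  set v : ℝ := g cstar with hv
  have hcstar_le : ∀ x, cstar x ≤ v := fun x => Finset.le_sup' _ (Finset.mem_univ x)
  -- separation
  set S : Set (X → ℝ) := Set.pi Set.univ (fun _ : X => Set.Iio v) with hS
  have hSconv : Convex ℝ S := convex_pi (fun _ _ => convex_Iio v)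
  have hSopen : IsOpen S := isOpen_set_pi Set.finite_univ (fun _ _ => isOpen_Iio)
  have hdisj : Disjoint S K := by
    rw [Set.disjoint_left]
    intro c hcS hcK
    have h1 : g c < v := by
      rw [hg, Finset.sup'_lt_iff]
      exact fun x _ => hcS x (Set.mem_univ x)
    exact absurd (hmin hcK) (not_le.mpr h1)
  obtain ⟨f, r, hfS, hfK⟩ := geometric_hahn_banach_open hSconv hSopen hKconv hdisj
  set a : X → ℝ := fun x => f (Pi.single x 1) with ha
  have hfrepr : ∀ c : X → ℝ, f c = ∑ x, c x * a x := by
    intro c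
    have hdecomp : c = ∑ x, c x • (Pi.single x 1 : X → ℝ) := by
      funext t
      simp [Finset.sum_apply, Pi.single_apply]
    conv_lhs => rw [hdecomp]
    rw [map_sum]
    simp [smul_eq_mul, ha]
  -- coordinates of separating functional are nonneg
  have hconstS : ∀ ε : ℝ, 0 < ε → (fun _ : X => v - ε) ∈ S := by
    intro ε hε x _
    simp only [Set.mem_Iio]
    linarith
  have hanneg : ∀ x, 0 ≤ a x := by
    intro x0
    by_contra h
    push_neg at h
    set c0 : X → ℝ := fun _ => v - 1 with hc0
    have hfc0 : f c0 < r := hfS c0 (hconstS 1 one_pos)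
    set t : ℝ := (r - f c0 + 1) / (-(a x0)) with ht
    have ht0 : 0 < t := div_pos (by linarith) (by linarith)
    have hmem : c0 - t • (Pi.single x0 1 : X → ℝ) ∈ S := by
      intro x _
      simp only [Set.mem_Iio, Pi.sub_apply, Pi.smul_apply, Pi.single_apply, smul_eq_mul, hc0]
      by_cases hx : x = x0 <;> simp [hx] <;> nlinarith
    have hlt : f (c0 - t • (Pi.single x0 1 : X → ℝ)) < r := hfS _ hmem
    rw [f.map_sub, f.map_smul] at hlt
    have haa : f (Pi.single x0 1 : X → ℝ) = a x0 := rfl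
    rw [haa, smul_eq_mul] at hlt
    have htm : t * (-(a x0)) = r - f c0 + 1 := by
      rw [ht, div_mul_cancel₀]
      linarith
    nlinarith
  set A : ℝ := ∑ x, a x with hA
  have hfconst : ∀ s : ℝ, f (fun _ => s) = s * A := by
    intro s
    rw [hfrepr, hA, Finset.mul_sum]
  have hvAr : v * A ≤ r := by
    by_contra h
    push_neg at h
    have hA0 : 0 < A := by
      have h1 : (v - 1) * A < r := by rw [← hfconst]; exact hfS _ (hconstS 1 one_pos)
      nlinarith
    set ε : ℝ := (v * A - r) / A with hε
    have hεpos : 0 < ε := div_pos (by linarith) hA0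
    have := hfS _ (hconstS ε hεpos)
    rw [hfconst] at this
    have : (v - ε) * A = r := by
      rw [hε]; field_simp; ring
    nlinarith [hfS _ (hconstS ε hεpos), hfconst (v - ε)]
  have hrfcstar : r ≤ f cstar := hfK cstar hcstarK
  have hfcstar_le : f cstar ≤ v * A := by
    rw [hfrepr, hA, Finset.mul_sum]
    apply Finset.sum_le_sum
    intro x _
    exact mul_le_mul_of_nonneg_right (hcstar_le x) (hanneg x)
  have hrvA : r = v * A := le_antisymm (hrfcstar.trans hfcstar_le) hvAr
  have hApos : 0 < A := by
    have h1 : (v - 1) * A < r := by rw [← hfconst]; exact hfS _ (hconstS 1 one_pos)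
    nlinarith
  set pstar : X → ℝ := fun x => a x / A with hpstar
  have hpstar0 : ∀ x, 0 ≤ pstar x := fun x => div_nonneg (hanneg x) hApos.le
  have hpstar1 : ∑ x, pstar x = 1 := by
    rw [hpstar, ← Finset.sum_div, ← hA, div_self hApos.ne']
  -- the two key inequalities
  have key1 : ∀ y : Y, v ≤ ∑ x, pstar x * u x y := by
    intro y
    have hCy : (fun x => u x y) ∈ K := subset_convexHull ℝ C ⟨y, rfl⟩
    have h1 : r ≤ ∑ x, u x y * a x := by rw [← hfrepr]; exact hfK _ hCy
    have h2 : ∑ x, pstar x * u x y = (∑ x, u x y * a x) / A := by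
      rw [Finset.sum_div]
      exact Finset.sum_congr rfl (fun x _ => by rw [hpstar]; ring)
    rw [h2, le_div_iff₀ hApos, ← hrvA]
    linarith [h1]
  have key2 : ∑ x, pstar x * cstar x = v := by
    apply le_antisymm
    · calc ∑ x, pstar x * cstar x ≤ ∑ x, pstar x * v :=
            Finset.sum_le_sum (fun x _ =>
              mul_le_mul_of_nonneg_left (hcstar_le x) (hpstar0 x))
      _ = v := by rw [← Finset.sum_mul, hpstar1, one_mul]
    · have h1 : r ≤ ∑ x, cstar x * a x := by rw [← hfrepr]; exact hfK _ hcstarK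
      have h2 : ∑ x, pstar x * cstar x = (∑ x, cstar x * a x) / A := by
        rw [Finset.sum_div]
        exact Finset.sum_congr rfl (fun x _ => by rw [hpstar]; ring)
      rw [h2, le_div_iff₀ hApos, ← hrvA]
      linarith [h1]
  -- realize cstar by a probability measure
  rw [hKeq] at hcstarK
  obtain ⟨⟨w, ys⟩, ⟨⟨hw0, hw1⟩, -⟩, hΦeq⟩ := hcstarK
  haveI hqprob := acces_isProbability w hw0 hw1 ys
  set qstar : ProbabilityMeasure Y :=
    ⟨∑ i, ENNReal.ofReal (w i) • Measure.dirac (ys i), hqprob⟩ with hqstar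
  have hint : ∀ x, ∫ y, u x y ∂(qstar : Measure Y) = cstar x := by
    intro x
    show ∫ y, u x y ∂(∑ i, ENNReal.ofReal (w i) • Measure.dirac (ys i)) = cstar x
    rw [acces_integral_comb w hw0 ys (u x) (hc x)]
    have := congrFun hΦeq x
    simp only [hΦ, Finset.sum_apply, Pi.smul_apply, smul_eq_mul] at this
    exact this
  refine ⟨pstar, qstar, ⟨hpstar0, hpstar1⟩, ?_⟩
  rintro p ⟨hp0, hp1⟩ q
  have hLq : ∑ x, pstar x * ∫ y, u x y ∂(qstar : Measure Y) = v := by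
    simp only [hint]; exact key2
  constructor
  · rw [hLq]
    simp only [hint]
    calc ∑ x, p x * cstar x ≤ ∑ x, p x * v :=
          Finset.sum_le_sum (fun x _ =>
            mul_le_mul_of_nonneg_left (hcstar_le x) (hp0 x))
      _ = v := by rw [← Finset.sum_mul, hp1, one_mul]
  · rw [hLq]
    have hintq : ∀ x, Integrable (fun y => pstar x * u x y) (q : Measure Y) :=
      fun x => (acces_integrable (u x) (hc x) _).const_mul _
    have hswap : ∑ x, pstar x * ∫ y, u x y ∂(q : Measure Y)
        = ∫ y, (∑ x, pstar x * u x y) ∂(q : Measure Y) := by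
      rw [integral_finset_sum _ (fun x _ => hintq x)]
      exact Finset.sum_congr rfl (fun x _ => (integral_const_mul _ _).symm)
    rw [hswap]
    have hconst : ∫ _ : Y, v ∂(q : Measure Y) = v := by
      simp [integral_const]
    rw [← hconst]
    apply integral_mono (integrable_const v) ?_ (fun y => key1 y)
    exact integrable_finset_sum _ (fun x _ => hintq x)
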